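/- Let π be a probability vector fixed by a reversible stochastic matrix P (i.e. πP = π and detailed balance holds), diagonalized as P = D_π^{-1/2}U^TΛUD_π^{1/2} with eigenvectors ξ_ℓ and eigenvalues λ_ℓ (with λ_1 = 1 and ξ_1 constant). If for some i ≠ j the L¹ distance between rows satisfies ‖P_i − P_j‖_1 > δ q λ_2, then there exists ℓ ≥ 2 such that |ξ_ℓ(i) − ξ_ℓ(j)| ≥ δ. -/
import Mathlib


/-- Let `P` be reversible with respect to the positive probability vector `π`,
diagonalized as `P = D_π^{-1/2} Uᵀ Λ U D_π^{1/2}` with eigenvectors `ξ_ℓ(i) = π_i^{-1/2} U ℓ i`,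
`λ_1 = 1` with constant eigenvector (`U 0 j = √(π j)`), and `|λ_ℓ| ≤ λ₂` for `ℓ ≠ 0`.
If `‖P_i − P_j‖₁ > δ q λ₂` for some `i ≠ j`, then some `ℓ ≠ 0` has `|ξ_ℓ(i) − ξ_ℓ(j)| ≥ δ`. -/
theorem stmt5 (q : ℕ) [NeZero q] (P : Matrix (Fin q) (Fin q) ℝ) (π : Fin q → ℝ)
    (hπpos : ∀ i, 0 < π i) (hπsum : ∑ i, π i = 1)
    (hstoch : ∀ i, ∑ j, P i j = 1) (hPnonneg : ∀ i j, 0 ≤ P i j)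
    (hrev : ∀ i j, π i * P i j = π j * P j i)
    (U : Matrix (Fin q) (Fin q) ℝ) (lam : Fin q → ℝ) (lam2 δ : ℝ)
    (hUorth : U * U.transpose = 1) (hUorth' : U.transpose * U = 1)
    (hU0 : ∀ j, U 0 j = Real.sqrt (π j))
    (hlam0 : lam 0 = 1) (hlam2 : 0 ≤ lam2) (hlam : ∀ ℓ, ℓ ≠ 0 → |lam ℓ| ≤ lam2)
    (hδ : 0 < δ)
    (hdiag : P = Matrix.diagonal (fun i => (Real.sqrt (π i))⁻¹) * U.transpose *
      Matrix.diagonal lam * U * Matrix.diagonal (fun i => Real.sqrt (π i)))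
    (i j : Fin q) (hij : i ≠ j)
    (hL1 : ∑ k, |P i k - P j k| > δ * q * lam2) :
    ∃ ℓ : Fin q, ℓ ≠ 0 ∧
      δ ≤ |(Real.sqrt (π i))⁻¹ * U ℓ i - (Real.sqrt (π j))⁻¹ * U ℓ j| := by
  by_contra hcon
  push_neg at hcon
  have hsq : ∀ k, (0:ℝ) < Real.sqrt (π k) := fun k => Real.sqrt_pos.2 (hπpos k)
  -- entry formula
  have hent : ∀ a b, P a b = ∑ ℓ, (Real.sqrt (π a))⁻¹ * U ℓ a * lam ℓ * U ℓ b * Real.sqrt (π b) := by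
    intro a b
    rw [hdiag]
    simp [Matrix.mul_apply, Matrix.diagonal_apply, Finset.mul_sum, Finset.sum_mul]
  set d : Fin q → ℝ := fun ℓ => (Real.sqrt (π i))⁻¹ * U ℓ i - (Real.sqrt (π j))⁻¹ * U ℓ j with hd
  have hkey : ∀ k, P i k - P j k = ∑ ℓ, lam ℓ * d ℓ * (U ℓ k * Real.sqrt (π k)) := by
    intro k
    rw [hent i k, hent j k, ← Finset.sum_sub_distrib]
    exact Finset.sum_congr rfl fun ℓ _ => by simp only [hd]; ring
  -- row norms
  have hrow : ∀ ℓ, ∑ k, U ℓ k * U ℓ k = 1 := by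
    intro ℓ
    have := congrFun (congrFun hUorth ℓ) ℓ
    simpa [Matrix.mul_apply, Matrix.one_apply] using this
  -- S ℓ ≤ 1
  have hS : ∀ ℓ, ∑ k, |U ℓ k| * Real.sqrt (π k) ≤ 1 := by
    intro ℓ
    have hcs := Finset.sum_mul_sq_le_sq_mul_sq Finset.univ
      (fun k => |U ℓ k|) (fun k => Real.sqrt (π k))
    have h1 : ∑ k, |U ℓ k| ^ 2 = 1 := by
      rw [← hrow ℓ]; exact Finset.sum_congr rfl fun k _ => by rw [sq_abs]; ring
    have h2 : ∑ k, Real.sqrt (π k) ^ 2 = 1 := by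
      rw [← hπsum]; exact Finset.sum_congr rfl fun k _ => Real.sq_sqrt (hπpos k).le
    rw [h1, h2] at hcs
    have hSnn : (0:ℝ) ≤ ∑ k, |U ℓ k| * Real.sqrt (π k) :=
      Finset.sum_nonneg fun k _ => mul_nonneg (abs_nonneg _) (hsq k).le
    nlinarith [hcs]
  -- d 0 = 0
  have hd0 : d 0 = 0 := by
    simp [hd, hU0, inv_mul_cancel₀ (ne_of_gt (hsq i)), inv_mul_cancel₀ (ne_of_gt (hsq j))]
  -- per-ℓ bound
  have hbound : ∀ ℓ : Fin q, |lam ℓ * d ℓ| * (∑ k, |U ℓ k| * Real.sqrt (π k)) ≤ lam2 * δ := by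
    intro ℓ
    have hSnn : (0:ℝ) ≤ ∑ k, |U ℓ k| * Real.sqrt (π k) :=
      Finset.sum_nonneg fun k _ => mul_nonneg (abs_nonneg _) (hsq k).le
    by_cases h0 : ℓ = 0
    · subst h0; simp [hd0, mul_nonneg hlam2 hδ.le]
    · have h1 : |lam ℓ * d ℓ| ≤ lam2 * δ := by
        rw [abs_mul]
        exact mul_le_mul (hlam ℓ h0) (hcon ℓ h0).le (abs_nonneg _) hlam2
      calc |lam ℓ * d ℓ| * (∑ k, |U ℓ k| * Real.sqrt (π k))
          ≤ (lam2 * δ) * 1 := mul_le_mul h1 (hS ℓ) hSnn (by positivity)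
        _ = lam2 * δ := by ring
  -- main bound
  have hmain : ∑ k, |P i k - P j k| ≤ (q : ℝ) * (lam2 * δ) := by
    calc ∑ k, |P i k - P j k|
        ≤ ∑ k, ∑ ℓ, |lam ℓ * d ℓ * (U ℓ k * Real.sqrt (π k))| := by
          refine Finset.sum_le_sum fun k _ => ?_
          rw [hkey k]
          exact Finset.abs_sum_le_sum_abs _ _
      _ = ∑ ℓ, ∑ k, |lam ℓ * d ℓ| * (|U ℓ k| * Real.sqrt (π k)) := by
          rw [Finset.sum_comm]
          refine Finset.sum_congr rfl fun ℓ _ => Finset.sum_congr rfl fun k _ => ?_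
          rw [abs_mul, abs_mul, abs_mul, abs_of_nonneg (hsq k).le]
      _ = ∑ ℓ, |lam ℓ * d ℓ| * (∑ k, |U ℓ k| * Real.sqrt (π k)) := by
          refine Finset.sum_congr rfl fun ℓ _ => ?_
          rw [Finset.mul_sum]
      _ ≤ ∑ _ℓ : Fin q, lam2 * δ := Finset.sum_le_sum fun ℓ _ => hbound ℓ
      _ = (q : ℝ) * (lam2 * δ) := by simp [Finset.sum_const]
  nlinarith [hL1, hmain]
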